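/- Fix an anchor point (b_a, y_a) with 0 < b_a < y_a, write r_a := b_a/y_a and Δ_a := y_a − b_a, and fix θ̄ ∈ [0,1) with θ := 1 − θ̄ such that θ̄ < r_a < 1. Let α ≥ α̂, where α̂ is the minimal admissible decay slope. Then the set { x_U ∈ [0, y_a) : α(y_a − x_U)² ≥ 2Δ_a and ( α(y_a − x_U) ≤ θ or α(b_a − θ̄·y_a) − α·θ·x_U − θ²/2 ≥ 0 ) } has a maximum x̂_U(α), and x̂_U(α) = y_a − √(2Δ_a/α) if α·Δ_a ≤ θ²/2, while x̂_U(α) = y_a − Δ_a/θ − θ/(2α) if α·Δ_a ≥ θ²/2; in the boundary case α·Δ_a = θ²/2 both formulas give the common value y_a − θ/α. -/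

import Mathlib

set_option maxHeartbeats 800000 in
theorem xUHat_aux (ba ya θbar α : ℝ)
    (hba : 0 < ba) (hbya : ba < ya)
    (hθ0 : 0 ≤ θbar) (hθ1 : θbar < 1)
    (hra : θbar < ba / ya) (hra1 : ba / ya < 1)
    (hα : (if (1 + θbar) / 2 ≤ ba / ya then 2 * (1 - ba / ya) / ya
      else (1 - θbar) ^ 2 / (2 * (ba - θbar * ya))) ≤ α) :
    IsGreatest {xU : ℝ | xU ∈ Set.Ico (0:ℝ) ya ∧ 2 * (ya - ba) ≤ α * (ya - xU) ^ 2 ∧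
        (α * (ya - xU) ≤ (1 - θbar) ∨
          0 ≤ α * (ba - θbar * ya) - α * (1 - θbar) * xU - (1 - θbar) ^ 2 / 2)}
      (if α * (ya - ba) ≤ (1 - θbar) ^ 2 / 2 then ya - Real.sqrt (2 * (ya - ba) / α)
        else ya - (ya - ba) / (1 - θbar) - (1 - θbar) / (2 * α)) ∧
    (α * (ya - ba) ≤ (1 - θbar) ^ 2 / 2 →
      IsGreatest {xU : ℝ | xU ∈ Set.Ico (0:ℝ) ya ∧ 2 * (ya - ba) ≤ α * (ya - xU) ^ 2 ∧
        (α * (ya - xU) ≤ (1 - θbar) ∨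
          0 ≤ α * (ba - θbar * ya) - α * (1 - θbar) * xU - (1 - θbar) ^ 2 / 2)}
        (ya - Real.sqrt (2 * (ya - ba) / α))) ∧
    ((1 - θbar) ^ 2 / 2 ≤ α * (ya - ba) →
      IsGreatest {xU : ℝ | xU ∈ Set.Ico (0:ℝ) ya ∧ 2 * (ya - ba) ≤ α * (ya - xU) ^ 2 ∧
        (α * (ya - xU) ≤ (1 - θbar) ∨
          0 ≤ α * (ba - θbar * ya) - α * (1 - θbar) * xU - (1 - θbar) ^ 2 / 2)}
        (ya - (ya - ba) / (1 - θbar) - (1 - θbar) / (2 * α))) ∧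
    (α * (ya - ba) = (1 - θbar) ^ 2 / 2 →
      ya - Real.sqrt (2 * (ya - ba) / α) = ya - (1 - θbar) / α ∧
      ya - (ya - ba) / (1 - θbar) - (1 - θbar) / (2 * α) = ya - (1 - θbar) / α) := by
  have hya : 0 < ya := hba.trans hbya
  have hθ : 0 < 1 - θbar := by linarith
  have hΔ : 0 < ya - ba := by linarith
  have hc : 0 < ba - θbar * ya := by
    have h := (lt_div_iff₀ hya).mp hra; linarith
  have hkey : (2*(ya-ba) ≤ α*ya^2 ∧ ya - ba ≤ ba - θbar*ya) ∨
      ((1-θbar)^2 ≤ 2*α*(ba-θbar*ya) ∧ ba - θbar*ya < ya - ba) := by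
    by_cases hco : (1 + θbar) / 2 ≤ ba / ya
    · rw [if_pos hco] at hα
      left
      have h1 : (1+θbar)*ya ≤ 2*ba := by
        have := (div_le_div_iff₀ (by norm_num) hya).mp hco
        linarith
      constructor
      · have h3 : 2*(1-ba/ya)/ya = 2*(ya-ba)/ya^2 := by field_simp
        rw [h3] at hα
        have := (div_le_iff₀ (by positivity)).mp hα
        nlinarith [this]
      · linarith
    · rw [if_neg hco] at hα
      right
      push_neg at hco
      have h1 : 2*ba < (1+θbar)*ya := by
        have := (div_lt_div_iff₀ hya (by norm_num)).mp hco; linarith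
      constructor
      · have := (div_le_iff₀ (by positivity)).mp hα; linarith
      · linarith
  have hα0 : 0 < α := by
    rcases hkey with ⟨h1,_⟩|⟨h1,_⟩ <;> nlinarith
  have hGA : α * (ya - ba) ≤ (1 - θbar) ^ 2 / 2 →
      IsGreatest {xU : ℝ | xU ∈ Set.Ico (0:ℝ) ya ∧ 2 * (ya - ba) ≤ α * (ya - xU) ^ 2 ∧
        (α * (ya - xU) ≤ (1 - θbar) ∨
          0 ≤ α * (ba - θbar * ya) - α * (1 - θbar) * xU - (1 - θbar) ^ 2 / 2)}
        (ya - Real.sqrt (2 * (ya - ba) / α)) := by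
    intro h
    have hAya : 2*(ya-ba) ≤ α*ya^2 := by
      rcases hkey with ⟨h1,_⟩|⟨h1,h2⟩
      · exact h1
      · nlinarith
    have hq : 0 ≤ 2*(ya-ba)/α := by positivity
    have hs2 : (Real.sqrt (2*(ya-ba)/α))^2 = 2*(ya-ba)/α := Real.sq_sqrt hq
    set s := Real.sqrt (2*(ya-ba)/α) with hsdef
    have hspos : 0 < s := Real.sqrt_pos.mpr (by positivity)
    have hsya : s ≤ ya := by
      rw [hsdef]
      calc Real.sqrt (2*(ya-ba)/α) ≤ Real.sqrt (ya^2) :=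
            Real.sqrt_le_sqrt ((div_le_iff₀ hα0).mpr (by nlinarith))
        _ = ya := Real.sqrt_sq hya.le
    have hαs2 : α * s^2 = 2*(ya-ba) := by
      rw [hs2]; field_simp
    constructor
    · refine ⟨⟨by linarith, by linarith⟩, ?_, Or.inl ?_⟩
      · have hr : ya - (ya - s) = s := by ring
        rw [hr, hαs2]
      · have hr : ya - (ya - s) = s := by ring
        rw [hr]
        nlinarith [mul_nonneg hα0.le hspos.le, hαs2, hθ, h, hα0]
    · rintro xU ⟨⟨hx0, hxy⟩, hcon, -⟩
      have h2 : 2*(ya-ba)/α ≤ (ya-xU)^2 := (div_le_iff₀ hα0).mpr (by nlinarith)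
      have h1 : s ≤ ya - xU := by
        calc s ≤ Real.sqrt ((ya-xU)^2) := Real.sqrt_le_sqrt h2
          _ = ya - xU := Real.sqrt_sq (by linarith)
      linarith
  have hGB : (1 - θbar) ^ 2 / 2 ≤ α * (ya - ba) →
      IsGreatest {xU : ℝ | xU ∈ Set.Ico (0:ℝ) ya ∧ 2 * (ya - ba) ≤ α * (ya - xU) ^ 2 ∧
        (α * (ya - xU) ≤ (1 - θbar) ∨
          0 ≤ α * (ba - θbar * ya) - α * (1 - θbar) * xU - (1 - θbar) ^ 2 / 2)}
        (ya - (ya - ba) / (1 - θbar) - (1 - θbar) / (2 * α)) := by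
    intro h
    have hBc : (1-θbar)^2 ≤ 2*α*(ba-θbar*ya) := by
      rcases hkey with ⟨h1,h2⟩|⟨h1,_⟩
      · nlinarith
      · exact h1
    set m := ya - (ya - ba)/(1-θbar) - (1-θbar)/(2*α) with hm
    have hmeq : α*(ba-θbar*ya) - α*(1-θbar)*m - (1-θbar)^2/2 = 0 := by
      rw [hm]; field_simp; ring
    have htval : (1-θbar)*(ya-m)*(2*α) = 2*α*(ya-ba) + (1-θbar)^2 := by
      rw [hm]; field_simp; ring
    have h4 : 0 ≤ (1-θbar)*(2*α)*m := by nlinarith [htval, hBc]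
    have hm0 : 0 ≤ m := by
      nlinarith [h4, mul_pos hθ (mul_pos two_pos hα0)]
    have hmya : m < ya := by
      have h1 : 0 < (ya-ba)/(1-θbar) := by positivity
      have h2 : 0 < (1-θbar)/(2*α) := by positivity
      rw [hm]; linarith
    have hsq : ((1-θbar)*(ya-m)*(2*α))^2 = (2*α*(ya-ba)+(1-θbar)^2)^2 := by rw [htval]
    have hcon : 2*(ya-ba) ≤ α*(ya-m)^2 := by
      nlinarith [hsq, sq_nonneg (2*α*(ya-ba) - (1-θbar)^2),
        show (0:ℝ) < 4*α*(1-θbar)^2 by positivity]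
    constructor
    · exact ⟨⟨hm0, hmya⟩, hcon, Or.inr (le_of_eq hmeq.symm)⟩
    · rintro xU ⟨⟨hx0, hxy⟩, hconx, hdis | hdis⟩
      · have hu : 0 < ya - xU := by linarith
        have h2 : 2*(ya-ba) ≤ (1-θbar)*(ya-xU) := by
          nlinarith [mul_le_mul_of_nonneg_right hdis hu.le, hconx]
        have h3 : 2*α*(2*(ya-ba)) ≤ 2*α*((1-θbar)*(ya-xU)) :=
          mul_le_mul_of_nonneg_left h2 (by positivity)
        nlinarith [h3, htval, h, mul_pos hθ (mul_pos two_pos hα0)]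
      · nlinarith [hmeq, hdis, mul_pos hα0 hθ]
  refine ⟨?_, hGA, hGB, ?_⟩
  · by_cases h : α * (ya - ba) ≤ (1 - θbar) ^ 2 / 2
    · rw [if_pos h]; exact hGA h
    · rw [if_neg h]; exact hGB (le_of_lt (not_le.mp h))
  · intro heq
    constructor
    · have h1 : 2*(ya-ba)/α = ((1-θbar)/α)^2 := by
        field_simp
        linear_combination 2*heq
      rw [h1, Real.sqrt_sq (by positivity : (0:ℝ) ≤ (1-θbar)/α)]
    · have h1 : (ya - ba)/(1-θbar) + (1-θbar)/(2*α) = (1-θbar)/α := by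
        field_simp
        linear_combination 2*heq
      linarith


/-- Proposition `prop:zp`: for any `α ≥ α̂` (the minimal admissible
    slope), the set of upper cutoffs `x_U ∈ [0, y_a)` for which the lower cutoff exists
    and the terminal rate is at least `θ̄` has a maximum `x̂_U(α)`, equal to
    `y_a − √(2Δ_a/α)` when `α·Δ_a ≤ θ²/2` and `y_a − Δ_a/θ − θ/(2α)` when
    `α·Δ_a ≥ θ²/2`; in the boundary case both formulas give `y_a − θ/α`. -/
theorem xUHat_isGreatest
    (ba ya θbar α : ℝ)
    (hba : 0 < ba) (hbya : ba < ya)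
    (hθ0 : 0 ≤ θbar) (hθ1 : θbar < 1)
    (hra : θbar < ba / ya) (hra1 : ba / ya < 1)
    (hα : (if (1 + θbar) / 2 ≤ ba / ya then 2 * (1 - ba / ya) / ya
      else (1 - θbar) ^ 2 / (2 * (ba - θbar * ya))) ≤ α) :
    let θ : ℝ := 1 - θbar
    let Δa : ℝ := ya - ba
    let S : Set ℝ := {xU : ℝ | xU ∈ Set.Ico (0:ℝ) ya ∧ 2 * Δa ≤ α * (ya - xU) ^ 2 ∧
      (α * (ya - xU) ≤ θ ∨ 0 ≤ α * (ba - θbar * ya) - α * θ * xU - θ ^ 2 / 2)}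
    IsGreatest S (if α * Δa ≤ θ ^ 2 / 2 then ya - Real.sqrt (2 * Δa / α)
      else ya - Δa / θ - θ / (2 * α)) ∧
    (α * Δa ≤ θ ^ 2 / 2 → IsGreatest S (ya - Real.sqrt (2 * Δa / α))) ∧
    (θ ^ 2 / 2 ≤ α * Δa → IsGreatest S (ya - Δa / θ - θ / (2 * α))) ∧
    (α * Δa = θ ^ 2 / 2 →
      ya - Real.sqrt (2 * Δa / α) = ya - θ / α ∧ ya - Δa / θ - θ / (2 * α) = ya - θ / α) := by
  intro θ Δa S
  exact xUHat_aux ba ya θbar α hba hbya hθ0 hθ1 hra hra1 hα
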